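/- Let d_m(x) be the unique formal power series with d_m(0)=0 satisfying x·(1+d_m(x))^{m+1} = d_m(x). Then for every 0 ≤ k ≤ m, d_m(x) = d_k( x · (1 + d_m(x))^{m−k} ). -/

import Mathlib

/-- Composition `f ∘ g` of formal power series (intended for `g` with zero
constant term): the `n`-th coefficient is `Σ_{k≤n} (coeff k f)·(coeff n g^k)`. -/
noncomputable def pscomp (f g : PowerSeries ℚ) : PowerSeries ℚ :=
  PowerSeries.mk fun n =>
    ∑ k ∈ Finset.range (n + 1),
      PowerSeries.coeff k f * PowerSeries.coeff n (g ^ k)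

open PowerSeries Finset

lemma pscomp_coeff (f g : PowerSeries ℚ) (n : ℕ) :
    PowerSeries.coeff n (pscomp f g) =
      ∑ k ∈ Finset.range (n + 1),
        PowerSeries.coeff k f * PowerSeries.coeff n (g ^ k) := by
  simp [pscomp]

lemma coeff_pow_g {g : PowerSeries ℚ} (hg : PowerSeries.constantCoeff g = 0)
    {i n : ℕ} (h : n < i) : PowerSeries.coeff n (g ^ i) = 0 := by
  have hd : (PowerSeries.X : PowerSeries ℚ) ^ i ∣ g ^ i :=
    pow_dvd_pow_of_dvd (PowerSeries.X_dvd_iff.mpr hg) i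
  exact PowerSeries.X_pow_dvd_iff.mp hd n h

lemma coeff_eval₂ {g : PowerSeries ℚ} (hg : PowerSeries.constantCoeff g = 0)
    (P : Polynomial ℚ) (n : ℕ) :
    PowerSeries.coeff n (P.eval₂ PowerSeries.C g) =
      ∑ i ∈ Finset.range (n + 1), P.coeff i * PowerSeries.coeff n (g ^ i) := by
  have hdeg : P.natDegree < max (P.natDegree + 1) (n + 1) :=
    lt_of_lt_of_le (Nat.lt_succ_self _) (le_max_left _ _)
  rw [Polynomial.eval₂_eq_sum_range' PowerSeries.C hdeg g, map_sum]
  have hsub : Finset.range (n + 1) ⊆ Finset.range (max (P.natDegree + 1) (n + 1)) :=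
    Finset.range_subset_range.mpr (le_max_right _ _)
  rw [Finset.sum_subset hsub]
  · apply Finset.sum_congr rfl
    intro i _
    rw [PowerSeries.coeff_C_mul]
  · intro i _ hi
    have hni : n < i := by simpa using hi
    exact mul_eq_zero_of_right _ (coeff_pow_g hg hni)

lemma coeff_pscomp_trunc {g : PowerSeries ℚ} (hg : PowerSeries.constantCoeff g = 0)
    (f : PowerSeries ℚ) {n N : ℕ} (hn : n < N) :
    PowerSeries.coeff n (pscomp f g) =
      PowerSeries.coeff n ((PowerSeries.trunc N f).eval₂ PowerSeries.C g) := by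
  rw [coeff_eval₂ hg, pscomp_coeff]
  apply Finset.sum_congr rfl
  intro i hi
  rw [PowerSeries.coeff_trunc, if_pos (lt_of_lt_of_le (Finset.mem_range.mp hi) hn)]

lemma trunc_pscomp {g : PowerSeries ℚ} (hg : PowerSeries.constantCoeff g = 0)
    (f : PowerSeries ℚ) (N : ℕ) :
    PowerSeries.trunc N (pscomp f g) =
      PowerSeries.trunc N ((PowerSeries.trunc N f).eval₂ PowerSeries.C g) := by
  ext i
  rw [PowerSeries.coeff_trunc, PowerSeries.coeff_trunc]
  split_ifs with h
  · exact coeff_pscomp_trunc hg f h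
  · rfl

lemma pscomp_one (g : PowerSeries ℚ) : pscomp 1 g = 1 := by
  ext n
  rw [pscomp_coeff]
  rw [Finset.sum_eq_single 0]
  · simp
  · intro i _ hi
    simp [PowerSeries.coeff_one, hi]
  · simp

lemma pscomp_add (f₁ f₂ g : PowerSeries ℚ) :
    pscomp (f₁ + f₂) g = pscomp f₁ g + pscomp f₂ g := by
  ext n
  simp [pscomp_coeff, add_mul, Finset.sum_add_distrib]

lemma pscomp_X {g : PowerSeries ℚ} (hg : PowerSeries.constantCoeff g = 0) :
    pscomp PowerSeries.X g = g := by
  ext n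
  rw [pscomp_coeff]
  rw [Finset.sum_eq_single 1]
  · cases n with
    | zero => simp
    | succ n => simp
  · intro i _ hi
    simp [PowerSeries.coeff_X, hi]
  · intro h
    have hn : n = 0 := by
      by_contra hn
      exact h (Finset.mem_range.mpr (by omega))
    subst hn
    simp [hg]

lemma pscomp_mul {g : PowerSeries ℚ} (hg : PowerSeries.constantCoeff g = 0)
    (f₁ f₂ : PowerSeries ℚ) :
    pscomp (f₁ * f₂) g = pscomp f₁ g * pscomp f₂ g := by
  ext n
  set N := n + 1 with hN
  have hn : n < N := Nat.lt_succ_self n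
  rw [PowerSeries.coeff_mul_eq_coeff_trunc_mul_trunc _ _ hn,
      trunc_pscomp hg f₁, trunc_pscomp hg f₂,
      ← PowerSeries.coeff_mul_eq_coeff_trunc_mul_trunc _ _ hn,
      ← Polynomial.eval₂_mul, coeff_eval₂ hg, coeff_pscomp_trunc hg _ hn, coeff_eval₂ hg]
  apply Finset.sum_congr rfl
  intro i hi
  have hiN : i < N := lt_of_lt_of_le (Finset.mem_range.mp hi) le_rfl
  congr 1
  rw [PowerSeries.coeff_trunc, if_pos hiN, ← Polynomial.coeff_coe, Polynomial.coe_mul,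
      ← PowerSeries.coeff_mul_eq_coeff_trunc_mul_trunc _ _ hiN]

lemma pscomp_pow {g : PowerSeries ℚ} (hg : PowerSeries.constantCoeff g = 0)
    (f : PowerSeries ℚ) (j : ℕ) : pscomp (f ^ j) g = pscomp f g ^ j := by
  induction j with
  | zero => simpa using pscomp_one g
  | succ j ih => rw [pow_succ, pow_succ, pscomp_mul hg, ih]

lemma fc_uniq {g : PowerSeries ℚ} (hg : PowerSeries.constantCoeff g = 0)
    (s : ℕ) (y₁ y₂ : PowerSeries ℚ)
    (h₁ : y₁ = g * (1 + y₁) ^ s) (h₂ : y₂ = g * (1 + y₂) ^ s) : y₁ = y₂ := by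
  have key : ∀ n : ℕ, (PowerSeries.X : PowerSeries ℚ) ^ n ∣ y₁ - y₂ := by
    intro n
    induction n with
    | zero => simp
    | succ n ih =>
      have hd : (y₁ - y₂) ∣ ((1 + y₁) ^ s - (1 + y₂) ^ s) := by
        simpa using sub_dvd_pow_sub_pow (1 + y₁) (1 + y₂) s
      have heq' : y₁ - y₂ = g * ((1 + y₁) ^ s - (1 + y₂) ^ s) := by
        rw [mul_sub, ← h₁, ← h₂]
      rw [heq', pow_succ']
      exact mul_dvd_mul (PowerSeries.X_dvd_iff.mpr hg) (ih.trans hd)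
  have hsub : y₁ - y₂ = 0 := by
    ext n
    rw [PowerSeries.X_pow_dvd_iff.mp (key (n + 1)) n (Nat.lt_succ_self n), map_zero]
  exact sub_eq_zero.mp hsub

/-- For `0 ≤ k ≤ m`, the Fuss–Catalan series satisfy
`d_m(x) = d_k(x·(1 + d_m(x))^{m−k})`. -/
theorem fussCatalan_series_comp (m k : ℕ) (hk : k ≤ m)
    (d : ℕ → PowerSeries ℚ)
    (h0 : ∀ j, PowerSeries.constantCoeff (d j) = 0)
    (heq : ∀ j, PowerSeries.X * (1 + d j) ^ (j + 1) = d j) :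
    d m = pscomp (d k) (PowerSeries.X * (1 + d m) ^ (m - k)) := by
  set g : PowerSeries ℚ := PowerSeries.X * (1 + d m) ^ (m - k) with hgdef
  have hg : PowerSeries.constantCoeff g = 0 := by
    simp [hgdef]
  set y : PowerSeries ℚ := pscomp (d k) g with hy
  have h₁ : y = g * (1 + y) ^ (k + 1) := by
    have : pscomp (PowerSeries.X * (1 + d k) ^ (k + 1)) g = g * (1 + y) ^ (k + 1) := by
      rw [pscomp_mul hg, pscomp_X hg, pscomp_pow hg, pscomp_add, pscomp_one]
    rwa [heq k] at this
  have h₂ : d m = g * (1 + d m) ^ (k + 1) := by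
    have hmk : m - k + (k + 1) = m + 1 := by omega
    rw [hgdef, mul_assoc, ← pow_add, hmk, heq m]
  exact fc_uniq hg (k + 1) (d m) y h₂ h₁
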